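/- Let (G,Γ₁,Γ₂) be a boundary triple for S, and let A, B be bounded linear operators on G such that A B* = B A* and ker M^{A,B} = {0} (so that H^{A,B} is self-adjoint), where M^{A,B}(x₁,x₂) = (A x₁ − B x₂, B x₁ + A x₂) on G ⊕ G. Then for every z in the resolvent set of H⁰: z is an eigenvalue of H^{A,B} if and only if ker(B Q(z) − A) ≠ {0}; moreover ker(H^{A,B} − z) = γ(z)(ker(B Q(z) − A)). -/

import Mathlib

open ContinuousLinearMap

variable {H : Type*} [NormedAddCommGroup H] [InnerProductSpace ℂ H] [CompleteSpace H]
variable {G : Type*} [NormedAddCommGroup G] [InnerProductSpace ℂ G] [CompleteSpace G]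

/-- The operator `M^{A,B}` on `G × G`, `(x₁,x₂) ↦ (A x₁ - B x₂, B x₁ + A x₂)`. -/
noncomputable def MAB (A B : G →L[ℂ] G) : (G × G) →L[ℂ] (G × G) :=
  ((A.comp (fst ℂ G G)) - (B.comp (snd ℂ G G))).prod
    ((B.comp (fst ℂ G G)) + (A.comp (snd ℂ G G)))

/-- A bounded operator is boundedly invertible if it has a bounded two-sided inverse. -/
def IsBoundedlyInvertible {E F : Type*} [NormedAddCommGroup E] [NormedSpace ℂ E]
    [NormedAddCommGroup F] [NormedSpace ℂ F] (T : E →L[ℂ] F) : Prop :=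
  ∃ T' : F →L[ℂ] E, (∀ x, T' (T x) = x) ∧ (∀ y, T (T' y) = y)

/-- A densely defined operator is symmetric if `⟪Sφ, ψ⟫ = ⟪φ, Sψ⟫` on its domain. -/
def IsSymmetricPMap (S : H →ₗ.[ℂ] H) : Prop :=
  ∀ φ ψ : S.domain, (inner ℂ (S φ) (ψ : H) : ℂ) = inner ℂ (φ : H) (S ψ)

/-- A boundary triple `(G, Γ₁, Γ₂)` for a symmetric operator `S`: two boundary maps
on `dom S*` satisfying the abstract Green identity and joint surjectivity. -/
structure BoundaryTriple (S : H →ₗ.[ℂ] H) (G : Type*) [NormedAddCommGroup G]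
    [InnerProductSpace ℂ G] [CompleteSpace G] where
  Γ₁ : S.adjoint.domain →ₗ[ℂ] G
  Γ₂ : S.adjoint.domain →ₗ[ℂ] G
  green : ∀ φ ψ : S.adjoint.domain,
    (inner ℂ (φ : H) (S.adjoint ψ) : ℂ) - inner ℂ (S.adjoint φ) (ψ : H)
      = (inner ℂ (Γ₁ φ) (Γ₂ ψ) : ℂ) - inner ℂ (Γ₂ φ) (Γ₁ ψ)
  surj : Function.Surjective fun φ : S.adjoint.domain => (Γ₁ φ, Γ₂ φ)

/-- The restriction of a partially defined operator `T` to a submodule `K` of its domain. -/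
noncomputable def pmapRestrict (T : H →ₗ.[ℂ] H) (K : Submodule ℂ T.domain) : H →ₗ.[ℂ] H where
  domain := K.map T.domain.subtype
  toFun := (T.toFun.comp K.subtype).comp
    (Submodule.equivMapOfInjective T.domain.subtype
      (Submodule.injective_subtype T.domain) K).symm.toLinearMap

/-- The distinguished extension `H⁰`: the restriction of `S*` to `ker Γ₁`. -/
noncomputable def H0 (S : H →ₗ.[ℂ] H) (BT : BoundaryTriple S G) : H →ₗ.[ℂ] H :=
  pmapRestrict S.adjoint (LinearMap.ker BT.Γ₁)

/-- The extension `H^{A,B}`: the restriction of `S*` to `{φ : A Γ₁ φ = B Γ₂ φ}`. -/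
noncomputable def HAB (S : H →ₗ.[ℂ] H) (BT : BoundaryTriple S G) (A B : G →L[ℂ] G) :
    H →ₗ.[ℂ] H :=
  pmapRestrict S.adjoint
    (LinearMap.ker ((A.toLinearMap.comp BT.Γ₁) - (B.toLinearMap.comp BT.Γ₂)))

/-- `R` is the resolvent of `T` at `z`: a bounded, everywhere defined two-sided inverse
of `T - z`. -/
def IsResolventOf (T : H →ₗ.[ℂ] H) (z : ℂ) (R : H →L[ℂ] H) : Prop :=
  (∀ f : H, ∃ φ : T.domain, (φ : H) = R f ∧ T φ - z • (φ : H) = f) ∧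
  (∀ φ : T.domain, R (T φ - z • (φ : H)) = φ)

/-- `z` is in the resolvent set of `T`. -/
def InResolventSet (T : H →ₗ.[ℂ] H) (z : ℂ) : Prop := ∃ R, IsResolventOf T z R

/-- `γz` is the `Γ`-field at `z`: the inverse of `Γ₁` restricted to the deficiency
space `N_z = ker (S* - z)`. -/
def IsGammaField (S : H →ₗ.[ℂ] H) (BT : BoundaryTriple S G) (z : ℂ) (γz : G →L[ℂ] H) : Prop :=
  (∀ ξ : G, ∃ φ : S.adjoint.domain, (φ : H) = γz ξ ∧ S.adjoint φ = z • (φ : H) ∧ BT.Γ₁ φ = ξ) ∧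
  (∀ φ : S.adjoint.domain, S.adjoint φ = z • (φ : H) → γz (BT.Γ₁ φ) = (φ : H))

/-- `Qz` is the `Q`-function (Weyl function) at `z`: `Qz = Γ₂ ∘ γz`. -/
def IsQFunction (S : H →ₗ.[ℂ] H) (BT : BoundaryTriple S G) (z : ℂ)
    (γz : G →L[ℂ] H) (Qz : G →L[ℂ] G) : Prop :=
  IsGammaField S BT z γz ∧
    ∀ φ : S.adjoint.domain, S.adjoint φ = z • (φ : H) → Qz (BT.Γ₁ φ) = BT.Γ₂ φ


omit [CompleteSpace H] in
lemma pmapRestrict_mem (T : H →ₗ.[ℂ] H) (K : Submodule ℂ T.domain)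
    (ψ : T.domain) (hψ : ψ ∈ K) : (ψ : H) ∈ (pmapRestrict T K).domain :=
  ⟨ψ, hψ, rfl⟩

omit [CompleteSpace H] in
lemma pmapRestrict_apply (T : H →ₗ.[ℂ] H) (K : Submodule ℂ T.domain)
    (ψ : T.domain) (hψ : ψ ∈ K) :
    pmapRestrict T K ⟨(ψ : H), pmapRestrict_mem T K ψ hψ⟩ = T ψ := by
  have he : (Submodule.equivMapOfInjective T.domain.subtype
      (Submodule.injective_subtype T.domain) K).symm
      ⟨(ψ : H), pmapRestrict_mem T K ψ hψ⟩ = ⟨ψ, hψ⟩ := by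
    rw [LinearEquiv.symm_apply_eq]
    rfl
  show ((T.toFun.comp K.subtype).comp _) _ = _
  show (T.toFun ∘ₗ K.subtype) _ = _
  exact congrArg (T.toFun ∘ₗ K.subtype) he

omit [CompleteSpace H] in
lemma pmapRestrict_exists (T : H →ₗ.[ℂ] H) (K : Submodule ℂ T.domain)
    (φ : (pmapRestrict T K).domain) :
    ∃ ψ : T.domain, ψ ∈ K ∧ (ψ : H) = (φ : H) ∧ pmapRestrict T K φ = T ψ := by
  obtain ⟨ψ, hψ, hval⟩ := φ.2
  refine ⟨ψ, hψ, hval, ?_⟩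
  have hψ2 : ψ ∈ K := hψ
  have hφ : φ = ⟨(ψ : H), pmapRestrict_mem T K ψ hψ2⟩ := Subtype.ext hval.symm
  rw [hφ, pmapRestrict_apply T K ψ hψ2]

/-- Eigenvalues of self-adjoint extensions. Assume `A B* = B A*` and
`ker M^{A,B} = 0`. For `z` in the resolvent set of `H⁰`: `z` is an eigenvalue of `H^{A,B}`
iff `ker (BQ(z) − A) ≠ 0`, and `ker (H^{A,B} − z) = γ(z) (ker (BQ(z) − A))`. -/
theorem eigenvalues_of_extensions (S : H →ₗ.[ℂ] H)
    (hdense : Dense (S.domain : Set H)) (hclosed : S.IsClosed) (hsymm : IsSymmetricPMap S)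
    (BT : BoundaryTriple S G) (A B : G →L[ℂ] G)
    (hAB : A ∘L adjoint B = B ∘L adjoint A)
    (hker : ∀ x : G × G, MAB A B x = 0 → x = 0) :
    ∀ z : ℂ, InResolventSet (H0 S BT) z →
      ∀ (γz : G →L[ℂ] H) (Qz : G →L[ℂ] G), IsQFunction S BT z γz Qz →
        ((∃ φ : (HAB S BT A B).domain, (φ : H) ≠ 0 ∧ HAB S BT A B φ = z • (φ : H)) ↔
          ∃ u : G, u ≠ 0 ∧ (B ∘L Qz - A) u = 0) ∧
        {f : H | ∃ φ : (HAB S BT A B).domain, (φ : H) = f ∧ HAB S BT A B φ = z • (φ : H)} =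
          γz '' {u : G | (B ∘L Qz - A) u = 0} := by
  intro z hz γz Qz hQ
  obtain ⟨⟨hγ1, hγ2⟩, hQ2⟩ := hQ
  set K := LinearMap.ker ((A.toLinearMap.comp BT.Γ₁) - (B.toLinearMap.comp BT.Γ₂)) with hK
  -- From an eigenvector of HAB, produce an element of ker (B Qz - A).
  have fwd : ∀ φ : (HAB S BT A B).domain, HAB S BT A B φ = z • (φ : H) →
      ∃ ψ : S.adjoint.domain, (ψ : H) = (φ : H) ∧ S.adjoint ψ = z • (ψ : H) ∧
        γz (BT.Γ₁ ψ) = (ψ : H) ∧ (B ∘L Qz - A) (BT.Γ₁ ψ) = 0 := by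
    intro φ hφ
    obtain ⟨ψ, hψK, hval, happ⟩ := pmapRestrict_exists S.adjoint K φ
    have hφ' : pmapRestrict S.adjoint K φ = z • (φ : H) := hφ
    have heig : S.adjoint ψ = z • (ψ : H) := by
      rw [← happ, hφ', hval]
    have hbc : A (BT.Γ₁ ψ) = B (BT.Γ₂ ψ) := by
      have := hψK
      rw [hK, LinearMap.mem_ker, LinearMap.sub_apply, LinearMap.comp_apply,
        LinearMap.comp_apply, sub_eq_zero] at this
      exact this
    refine ⟨ψ, hval, heig, hγ2 ψ heig, ?_⟩
    have hq := hQ2 ψ heig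
    rw [ContinuousLinearMap.sub_apply, ContinuousLinearMap.comp_apply, hq, sub_eq_zero,
      ← hbc]
  -- From an element of ker (B Qz - A), produce an eigenvector of HAB.
  have bwd : ∀ u : G, (B ∘L Qz - A) u = 0 →
      ∃ φ : (HAB S BT A B).domain, (φ : H) = γz u ∧ HAB S BT A B φ = z • (φ : H) ∧
        (u ≠ 0 → (φ : H) ≠ 0) := by
    intro u hu
    obtain ⟨ψ, hψγ, heig, hΓ⟩ := hγ1 u
    have hbc : ψ ∈ K := by
      rw [hK, LinearMap.mem_ker, LinearMap.sub_apply, LinearMap.comp_apply,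
        LinearMap.comp_apply, sub_eq_zero]
      have hq := hQ2 ψ heig
      rw [ContinuousLinearMap.sub_apply, ContinuousLinearMap.comp_apply, sub_eq_zero] at hu
      show A (BT.Γ₁ ψ) = B (BT.Γ₂ ψ)
      rw [hΓ, ← hq, hΓ]
      exact hu.symm
    refine ⟨⟨(ψ : H), pmapRestrict_mem S.adjoint K ψ hbc⟩, hψγ, ?_, ?_⟩
    · show pmapRestrict S.adjoint K _ = _
      refine (pmapRestrict_apply S.adjoint K ψ hbc).trans ?_
      exact heig
    · intro hu0 h0
      apply hu0
      rw [← hΓ]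
      have : ψ = 0 := Subtype.ext h0
      rw [this, map_zero]
  constructor
  · constructor
    · rintro ⟨φ, hφ0, hφ⟩
      obtain ⟨ψ, hval, heig, hγψ, hker'⟩ := fwd φ hφ
      refine ⟨BT.Γ₁ ψ, ?_, hker'⟩
      intro h0
      apply hφ0
      rw [← hval, ← hγψ, h0, map_zero]
    · rintro ⟨u, hu0, hu⟩
      obtain ⟨φ, _, hφ, hne⟩ := bwd u hu
      exact ⟨φ, hne hu0, hφ⟩
  · ext f
    constructor
    · rintro ⟨φ, hval, hφ⟩
      obtain ⟨ψ, hvψ, heig, hγψ, hker'⟩ := fwd φ hφ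
      exact ⟨BT.Γ₁ ψ, hker', by rw [hγψ, hvψ, hval]⟩
    · rintro ⟨u, hu, hf⟩
      obtain ⟨φ, hφγ, hφ, _⟩ := bwd u hu
      exact ⟨φ, by rw [hφγ, hf], hφ⟩
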